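/- If an averaging algorithm is α-safe with respect to single rounds, then over macro-rounds consisting of L consecutive rounds it is α^L-safe: for each agent p, the value after L rounds lies in [α^L M + (1−α^L) m, (1−α^L) M + α^L m], where m and M are the minimum and maximum values over the in-neighbors of p in the product graph of the L communication graphs. -/

import Mathlib

/-- In-neighbors of `p` over `L` consecutive rounds `t+1, …, t+L`, i.e. in the
product graph `G_{t+1} ∘ ⋯ ∘ G_{t+L}` of the round communication graphs. -/
def inChain {n : ℕ} (In : ℕ → Fin n → Finset (Fin n)) (t : ℕ) :
    ℕ → Fin n → Finset (Fin n)
  | 0, p => {p}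
  | L + 1, p => (In (t + L + 1) p).biUnion (inChain In t L)

lemma self_mem_inChain {n : ℕ} (In : ℕ → Fin n → Finset (Fin n))
    (hself : ∀ t p, p ∈ In t p) (t : ℕ) :
    ∀ L p, p ∈ inChain In t L p
  | 0, p => by simp [inChain]
  | L + 1, p => by
    simp only [inChain, Finset.mem_biUnion]
    exact ⟨p, hself _ p, self_mem_inChain In hself t L p⟩

theorem alpha_safe_macro_rounds
    (n : ℕ) (hn : 0 < n) (α : ℝ) (hα : α ∈ Set.Ioc (0 : ℝ) (1 / 2))
    (In : ℕ → Fin n → Finset (Fin n))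
    (hself : ∀ t p, p ∈ In t p)
    (x : ℕ → Fin n → ℝ)
    (hsafe : ∀ t p, x (t + 1) p ∈ Set.Icc
        (α * sSup (x t '' (In (t + 1) p : Set (Fin n))) +
          (1 - α) * sInf (x t '' (In (t + 1) p : Set (Fin n))))
        ((1 - α) * sSup (x t '' (In (t + 1) p : Set (Fin n))) +
          α * sInf (x t '' (In (t + 1) p : Set (Fin n))))) :
    ∀ t L p, x (t + L) p ∈ Set.Icc
        (α ^ L * sSup (x t '' (inChain In t L p : Set (Fin n))) +
          (1 - α ^ L) * sInf (x t '' (inChain In t L p : Set (Fin n))))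
        ((1 - α ^ L) * sSup (x t '' (inChain In t L p : Set (Fin n))) +
          α ^ L * sInf (x t '' (inChain In t L p : Set (Fin n)))) := by
  intro t L
  induction L with
  | zero =>
    intro p
    have h : x t '' ((inChain In t 0 p : Finset (Fin n)) : Set (Fin n)) = {x t p} := by
      simp [inChain]
    simp [h]
  | succ L ih =>
    intro p
    have hα0 : (0:ℝ) < α := hα.1
    have hα1 : α ≤ 1/2 := hα.2
    have hαL : (0:ℝ) < α ^ L := pow_pos hα0 L
    have hαL1 : α ^ L ≤ 1 := pow_le_one₀ hα0.le (by linarith)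
    set M := sSup (x t '' (inChain In t (L+1) p : Set (Fin n))) with hMdef
    set m := sInf (x t '' (inChain In t (L+1) p : Set (Fin n))) with hmdef
    have hne : (x t '' (inChain In t (L+1) p : Set (Fin n))).Nonempty :=
      ⟨x t p, Set.mem_image_of_mem _ (by exact_mod_cast self_mem_inChain In hself t (L+1) p)⟩
    have hfin : (x t '' (inChain In t (L+1) p : Set (Fin n))).Finite := Set.toFinite _
    -- images over sub-chains are contained in the big image
    have hsub : ∀ q ∈ In (t + L + 1) p,
        x t '' (inChain In t L q : Set (Fin n)) ⊆
          x t '' (inChain In t (L+1) p : Set (Fin n)) := by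
      intro q hq
      apply Set.image_mono
      intro a ha
      show a ∈ ((inChain In t (L+1) p : Finset (Fin n)) : Set (Fin n))
      simp only [inChain, Finset.coe_biUnion, Set.mem_iUnion, Finset.mem_coe] at *
      exact ⟨q, hq, ha⟩
    have hneq : ∀ q : Fin n, (x t '' (inChain In t L q : Set (Fin n))).Nonempty :=
      fun q => ⟨x t q, Set.mem_image_of_mem _ (by exact_mod_cast self_mem_inChain In hself t L q)⟩
    -- per-neighbor sup/inf bounds
    have hSq_le : ∀ q ∈ In (t + L + 1) p,
        sSup (x t '' (inChain In t L q : Set (Fin n))) ≤ M :=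
      fun q hq => csSup_le_csSup hfin.bddAbove (hneq q) (hsub q hq)
    have hm_le : ∀ q ∈ In (t + L + 1) p,
        m ≤ sInf (x t '' (inChain In t L q : Set (Fin n))) :=
      fun q hq => csInf_le_csInf hfin.bddBelow (hneq q) (hsub q hq)
    have hIq_le_Sq : ∀ q : Fin n,
        sInf (x t '' (inChain In t L q : Set (Fin n))) ≤
          sSup (x t '' (inChain In t L q : Set (Fin n))) :=
      fun q => csInf_le_csSup (hneq q) (Set.toFinite _).bddBelow (Set.toFinite _).bddAbove
    -- the max and min are attained in some sub-chain
    have hMmem : M ∈ x t '' (inChain In t (L+1) p : Set (Fin n)) :=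
      hne.csSup_mem hfin
    have hmmem : m ∈ x t '' (inChain In t (L+1) p : Set (Fin n)) :=
      hne.csInf_mem hfin
    obtain ⟨a, ha, haM⟩ := hMmem
    obtain ⟨b, hb, hbm⟩ := hmmem
    have ha' : ∃ q ∈ In (t + L + 1) p, a ∈ inChain In t L q := by
      have : a ∈ ((inChain In t (L+1) p : Finset (Fin n)) : Set (Fin n)) := ha
      simpa [inChain, Finset.mem_biUnion] using this
    have hb' : ∃ q ∈ In (t + L + 1) p, b ∈ inChain In t L q := by
      have : b ∈ ((inChain In t (L+1) p : Finset (Fin n)) : Set (Fin n)) := hb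
      simpa [inChain, Finset.mem_biUnion] using this
    obtain ⟨qM, hqM, haqM⟩ := ha'
    obtain ⟨qm, hqm, hbqm⟩ := hb'
    have hSqM : sSup (x t '' (inChain In t L qM : Set (Fin n))) = M := by
      refine le_antisymm (hSq_le qM hqM) ?_
      rw [← haM]
      exact le_csSup (Set.toFinite _).bddAbove (Set.mem_image_of_mem _ haqM)
    have hIqm : sInf (x t '' (inChain In t L qm : Set (Fin n))) = m := by
      refine le_antisymm ?_ (hm_le qm hqm)
      rw [← hbm]
      exact csInf_le (Set.toFinite _).bddBelow (Set.mem_image_of_mem _ hbqm)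
    -- one-round step
    have hstep := hsafe (t + L) p
    set S := sSup (x (t + L) '' (In (t + L + 1) p : Set (Fin n))) with hSdef
    set I := sInf (x (t + L) '' (In (t + L + 1) p : Set (Fin n))) with hIdef
    have hstep' : α * S + (1 - α) * I ≤ x (t + L + 1) p ∧
        x (t + L + 1) p ≤ (1 - α) * S + α * I := hstep
    have hSne : (x (t + L) '' (In (t + L + 1) p : Set (Fin n))).Nonempty :=
      ⟨x (t + L) p, Set.mem_image_of_mem _ (by exact_mod_cast hself (t + L + 1) p)⟩
    -- bounds on S and I
    have hI_ge : m ≤ I := by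
      apply le_csInf hSne
      rintro v ⟨q, hq, rfl⟩
      have hi := (ih q).1
      have h1 := hm_le q (by exact_mod_cast hq)
      have h2 := hIq_le_Sq q
      nlinarith [hαL.le]
    have hS_le : S ≤ M := by
      apply csSup_le hSne
      rintro v ⟨q, hq, rfl⟩
      have hi := (ih q).2
      have h1 := hSq_le q (by exact_mod_cast hq)
      have h2 := hm_le q (by exact_mod_cast hq)
      have h3 := hIq_le_Sq q
      nlinarith [hαL.le]
    have hS_ge : α ^ L * M + (1 - α ^ L) * m ≤ S := by
      have hx : x (t + L) qM ≤ S :=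
        le_csSup (Set.toFinite _).bddAbove
          (Set.mem_image_of_mem _ (by exact_mod_cast hqM))
      have hi := (ih qM).1
      rw [hSqM] at hi
      have h1 := hm_le qM hqM
      nlinarith [hαL.le]
    have hI_le : (1 - α ^ L) * M + α ^ L * m ≤ I → True := fun _ => trivial
    have hI_le' : I ≤ (1 - α ^ L) * M + α ^ L * m := by
      have hx : I ≤ x (t + L) qm :=
        csInf_le (Set.toFinite _).bddBelow
          (Set.mem_image_of_mem _ (by exact_mod_cast hqm))
      have hi := (ih qm).2
      rw [hIqm] at hi
      have h1 := hSq_le qm hqm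
      nlinarith [hαL.le]
    -- combine
    have hpow : α ^ (L + 1) = α * α ^ L := by rw [pow_succ]; ring
    have hxeq : x (t + (L + 1)) p = x (t + L + 1) p := rfl
    constructor
    · have h1 : α * (α ^ L * M + (1 - α ^ L) * m) ≤ α * S :=
        mul_le_mul_of_nonneg_left hS_ge hα0.le
      have h2 : (1 - α) * m ≤ (1 - α) * I :=
        mul_le_mul_of_nonneg_left hI_ge (by linarith)
      rw [hpow]
      nlinarith [hstep'.1, hxeq]
    · have h1 : (1 - α) * S ≤ (1 - α) * M :=
        mul_le_mul_of_nonneg_left hS_le (by linarith)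
      have h2 : α * I ≤ α * ((1 - α ^ L) * M + α ^ L * m) :=
        mul_le_mul_of_nonneg_left hI_le' hα0.le
      rw [hpow]
      nlinarith [hstep'.2, hxeq]
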